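/- arXiv:1202.0844 — 4 statements merged into one kernel-verified Lean document; each statement's English description precedes it below -/
import Mathlib

section
/- Let Γ be a countable LITFA group. Then the integral group ring ℤ[Γ] has no zero divisors: for all a, b ∈ ℤ[Γ], if a·b = 0 then a = 0 or b = 0. (This is the domain part of Theorem 2.4(1)-(2) of the paper: every non-zero element of ℤ[Γ] is a non-zero divisor.) -/
/-- The space of bounded real-valued functions on `Γ`, as a submodule of `Γ → ℝ`. -/
def BoundedFun (Γ : Type*) : Submodule ℝ (Γ → ℝ) where
  carrier := {f | ∃ C : ℝ, ∀ x, |f x| ≤ C}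
  add_mem' := by
    rintro f g ⟨C, hC⟩ ⟨D, hD⟩
    exact ⟨C + D, fun x => (abs_add_le _ _).trans (add_le_add (hC x) (hD x))⟩
  zero_mem' := ⟨0, fun x => by simp⟩
  smul_mem' := by
    rintro c f ⟨C, hC⟩
    exact ⟨|c| * C, fun x => by
      simpa [abs_mul] using mul_le_mul_of_nonneg_left (hC x) (abs_nonneg c)⟩

/-- `m` is a left-invariant mean on the group `Γ`: an `ℝ`-linear functional on the space of
bounded functions `Γ → ℝ` which is nonnegative on nonnegative functions, sends the constant
function `1` to `1`, and is invariant under left translation. -/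
def IsInvariantMean (Γ : Type*) [Group Γ] (m : BoundedFun Γ →ₗ[ℝ] ℝ) : Prop :=
  (∀ f : BoundedFun Γ, (∀ x, 0 ≤ (f : Γ → ℝ) x) → 0 ≤ m f) ∧
  (m ⟨fun _ => (1 : ℝ), ⟨1, fun x => by norm_num⟩⟩ = 1) ∧
  (∀ (g : Γ) (f : BoundedFun Γ),
    m ⟨fun x => (f : Γ → ℝ) (g⁻¹ * x), by
      obtain ⟨C, hC⟩ := f.2
      exact ⟨C, fun x => hC _⟩⟩ = m f)

/-- A group is amenable if it admits a left-invariant mean. -/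
def IsAmenable (Γ : Type*) [Group Γ] : Prop :=
  ∃ m : BoundedFun Γ →ₗ[ℝ] ℝ, IsInvariantMean Γ m

private lemma uniqueMul_shift {Γ : Type*} [Group Γ] [DecidableEq Γ] {A B : Finset Γ} (a₁ b₁ : Γ)
    {a0 b0 : Γ}
    (h : UniqueMul (A.image (a₁⁻¹ * ·)) (B.image (· * b₁⁻¹)) a0 b0) :
    UniqueMul A B (a₁ * a0) (b0 * b₁) := by
  intro a b ha hb hab
  have key : (a₁⁻¹ * a) * (b * b₁⁻¹) = a0 * b0 := by
    have e : (a₁⁻¹ * a) * (b * b₁⁻¹) = a₁⁻¹ * ((a * b) * b₁⁻¹) := by group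
    rw [e, hab]; group
  obtain ⟨h1, h2⟩ := h (Finset.mem_image_of_mem _ ha) (Finset.mem_image_of_mem _ hb) key
  constructor
  · rw [← h1]; group
  · rw [← h2]; group

private lemma exists_uniqueMul {Γ : Type*} [Group Γ] [DecidableEq Γ]
    (hli : ∀ H : Subgroup Γ, H ≠ ⊥ → H.FG →
      ∃ φ : H →* Multiplicative ℤ, Function.Surjective φ) :
    ∀ n : ℕ, ∀ A B : Finset Γ, A.Nonempty → B.Nonempty → A.card + B.card ≤ n →
      ∃ a0 ∈ A, ∃ b0 ∈ B, UniqueMul A B a0 b0 := by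
  intro n
  induction n using Nat.strong_induction_on with
  | _ n IH =>
  intro A B hA hB hn
  obtain ⟨a₁, ha₁⟩ := hA
  obtain ⟨b₁, hb₁⟩ := hB
  set A2 := A.image (a₁⁻¹ * ·) with hA2
  set B2 := B.image (· * b₁⁻¹) with hB2
  suffices h : ∃ a0 ∈ A2, ∃ b0 ∈ B2, UniqueMul A2 B2 a0 b0 by
    obtain ⟨a0, ha0, b0, hb0, h⟩ := h
    obtain ⟨a, ha, rfl⟩ := Finset.mem_image.mp ha0
    obtain ⟨b, hb, rfl⟩ := Finset.mem_image.mp hb0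
    exact ⟨a₁ * (a₁⁻¹ * a), by simpa using ha, (b * b₁⁻¹) * b₁, by simpa using hb,
      uniqueMul_shift a₁ b₁ h⟩
  have hcardA : A2.card = A.card := Finset.card_image_of_injective _ (mul_right_injective a₁⁻¹)
  have hcardB : B2.card = B.card := Finset.card_image_of_injective _ (mul_left_injective b₁⁻¹)
  have h1A : (1 : Γ) ∈ A2 := Finset.mem_image.mpr ⟨a₁, ha₁, by group⟩
  have h1B : (1 : Γ) ∈ B2 := Finset.mem_image.mpr ⟨b₁, hb₁, by group⟩
  set H := Subgroup.closure (↑(A2 ∪ B2) : Set Γ) with hH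
  have hsub : ∀ x ∈ A2 ∪ B2, x ∈ H := fun x hx =>
    Subgroup.subset_closure (Finset.mem_coe.mpr hx)
  have hAH : ∀ x ∈ A2, x ∈ H := fun x hx => hsub x (Finset.mem_union_left _ hx)
  have hBH : ∀ x ∈ B2, x ∈ H := fun x hx => hsub x (Finset.mem_union_right _ hx)
  by_cases hbot : H = ⊥
  · -- everything is 1
    have hone : ∀ x ∈ A2 ∪ B2, x = 1 := fun x hx => by
      have := hsub x hx; rw [hbot, Subgroup.mem_bot] at this; exact this
    refine ⟨1, h1A, 1, h1B, fun a b ha hb _ => ?_⟩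
    exact ⟨hone a (Finset.mem_union_left _ ha), hone b (Finset.mem_union_right _ hb)⟩
  obtain ⟨φ, hφ⟩ := hli H hbot ⟨A2 ∪ B2, rfl⟩
  classical
  set v : Γ → ℤ := fun x => if h : x ∈ H then Multiplicative.toAdd (φ ⟨x, h⟩) else 0 with hv
  have hv1 : v 1 = 0 := by
    simp only [hv, dif_pos (one_mem H)]
    have : (⟨(1 : Γ), one_mem H⟩ : H) = 1 := rfl
    rw [this, map_one]; rfl
  have hvmul : ∀ x y, x ∈ H → y ∈ H → v (x * y) = v x + v y := by
    intro x y hx hy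
    have : (⟨x * y, mul_mem hx hy⟩ : H) = ⟨x, hx⟩ * ⟨y, hy⟩ := rfl
    simp only [hv, dif_pos hx, dif_pos hy, dif_pos (mul_mem hx hy), this, map_mul, toAdd_mul]
  have hvinv : ∀ x, x ∈ H → v x⁻¹ = -v x := by
    intro x hx
    have : (⟨x⁻¹, inv_mem hx⟩ : H) = (⟨x, hx⟩)⁻¹ := rfl
    simp only [hv, dif_pos hx, dif_pos (inv_mem hx), this, map_inv, toAdd_inv]
  obtain ⟨am, hamA, ham⟩ := Finset.exists_max_image A2 v ⟨1, h1A⟩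
  obtain ⟨bm, hbmB, hbm⟩ := Finset.exists_max_image B2 v ⟨1, h1B⟩
  set A' := A2.filter (fun a => v a = v am) with hA'
  set B' := B2.filter (fun b => v b = v bm) with hB'
  have hA'sub : A' ⊆ A2 := Finset.filter_subset _ _
  have hB'sub : B' ⊆ B2 := Finset.filter_subset _ _
  by_cases hcase : A' = A2 ∧ B' = B2
  · -- contradiction: v vanishes on generators but φ is surjective
    exfalso
    have hvam : v am = 0 := by
      have h1A' : (1 : Γ) ∈ A' := hcase.1 ▸ h1A
      have := (Finset.mem_filter.mp h1A').2
      rw [hv1] at this; omega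
    have hvbm : v bm = 0 := by
      have h1B' : (1 : Γ) ∈ B' := hcase.2 ▸ h1B
      have := (Finset.mem_filter.mp h1B').2
      rw [hv1] at this; omega
    have hgen : ∀ x ∈ (↑(A2 ∪ B2) : Set Γ), v x = 0 := by
      intro x hx
      rcases Finset.mem_union.mp (Finset.mem_coe.mp hx) with hx | hx
      · have : x ∈ A' := hcase.1 ▸ hx
        have := (Finset.mem_filter.mp this).2; omega
      · have : x ∈ B' := hcase.2 ▸ hx
        have := (Finset.mem_filter.mp this).2; omega
    have hall : ∀ x, x ∈ H → v x = 0 := by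
      intro x hx
      refine Subgroup.closure_induction (p := fun g _ => v g = 0) hgen hv1 ?_ ?_ hx
      · intro x y hx hy ihx ihy
        rw [hvmul x y hx hy, ihx, ihy]; ring
      · intro x hx ihx
        rw [hvinv x hx, ihx]; ring
    obtain ⟨h, hh⟩ := hφ (Multiplicative.ofAdd 1)
    have : v ↑h = 1 := by
      simp only [hv, dif_pos h.2]
      rw [Subtype.coe_eta, hh]; rfl
    rw [hall ↑h h.2] at this
    omega
  · -- strict decrease
    have hlt : A'.card + B'.card < A2.card + B2.card := by
      rcases not_and_or.mp hcase with hne | hne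
      · have h1 : A'.card < A2.card := Finset.card_lt_card (hA'sub.ssubset_of_ne hne)
        have h2 : B'.card ≤ B2.card := Finset.card_le_card hB'sub
        omega
      · have h1 : A'.card ≤ A2.card := Finset.card_le_card hA'sub
        have h2 : B'.card < B2.card := Finset.card_lt_card (hB'sub.ssubset_of_ne hne)
        omega
    have hle : A2.card + B2.card ≤ n := by omega
    obtain ⟨a0, ha0, b0, hb0, hu⟩ :=
      IH (A'.card + B'.card) (lt_of_lt_of_le hlt hle) A' B'
        ⟨am, Finset.mem_filter.mpr ⟨hamA, rfl⟩⟩ ⟨bm, Finset.mem_filter.mpr ⟨hbmB, rfl⟩⟩ le_rfl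
    refine ⟨a0, hA'sub ha0, b0, hB'sub hb0, ?_⟩
    intro a b ha hb hab
    have hva0 : v a0 = v am := (Finset.mem_filter.mp ha0).2
    have hvb0 : v b0 = v bm := (Finset.mem_filter.mp hb0).2
    have hsum : v a + v b = v am + v bm := by
      have e1 : v (a * b) = v a + v b := hvmul a b (hAH a ha) (hBH b hb)
      have e2 : v (a0 * b0) = v a0 + v b0 :=
        hvmul a0 b0 (hAH a0 (hA'sub ha0)) (hBH b0 (hB'sub hb0))
      rw [hab, e2] at e1; omega
    have hva : v a = v am := by have := ham a ha; have := hbm b hb; omega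
    have hvb : v b = v bm := by have := ham a ha; have := hbm b hb; omega
    exact hu (Finset.mem_filter.mpr ⟨ha, hva⟩) (Finset.mem_filter.mpr ⟨hb, hvb⟩) hab

/-- **Theorem 2.4(1)-(2), domain part.** If `Γ` is a countable LITFA group (locally indicable,
torsion-free, amenable), then the integral group ring `ℤ[Γ]` has no zero divisors. -/
theorem MonoidAlgebra.no_zero_divisors_of_litfa {Γ : Type*} [Group Γ] [Countable Γ]
    (htf : ∀ (g : Γ) (n : ℕ), 1 ≤ n → g ^ n = 1 → g = 1)
    (hli : ∀ H : Subgroup Γ, H ≠ ⊥ → H.FG →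
      ∃ φ : H →* Multiplicative ℤ, Function.Surjective φ)
    (ham : IsAmenable Γ) :
    ∀ a b : MonoidAlgebra ℤ Γ, a * b = 0 → a = 0 ∨ b = 0 := by
  haveI := Classical.decEq Γ
  haveI : UniqueProds Γ :=
    ⟨fun hA hB => exists_uniqueMul hli _ _ _ hA hB le_rfl⟩
  intro a b hab
  exact mul_eq_zero.mp hab
end

section
/- Let Γ be a countable LITFA group. Then the set of non-zero elements of ℤ[Γ] satisfies the right Ore condition: for every a ∈ ℤ[Γ] and every non-zero s ∈ ℤ[Γ] there exist b ∈ ℤ[Γ] and a non-zero t ∈ ℤ[Γ] such that a·t = s·b. (Part of Theorem 2.4(2): ℤ[Γ] is an Ore domain.) -/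
namespace OreLitfa

variable {Γ : Type*} [Group Γ]

open scoped Classical in
lemma support_single_mul (g : Γ) (p : MonoidAlgebra ℤ Γ) :
    (MonoidAlgebra.single g (1:ℤ) * p).coeff.support = p.coeff.support.image (g * ·) := by
  ext z
  simp only [Finsupp.mem_support_iff, MonoidAlgebra.coeff_single_mul_apply, one_mul,
    Finset.mem_image]
  constructor
  · intro h
    exact ⟨g⁻¹ * z, h, by group⟩
  · rintro ⟨x, hx, rfl⟩
    simpa using hx

open scoped Classical in
lemma support_mul_single (g : Γ) (p : MonoidAlgebra ℤ Γ) :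
    (p * MonoidAlgebra.single g (1:ℤ)).coeff.support = p.coeff.support.image (· * g) := by
  ext z
  simp only [Finsupp.mem_support_iff, MonoidAlgebra.coeff_mul_single_apply, mul_one,
    Finset.mem_image]
  constructor
  · intro h
    exact ⟨z * g⁻¹, h, by group⟩
  · rintro ⟨x, hx, rfl⟩
    simpa using hx

open scoped Classical in
lemma top_mul (d : Γ → ℤ) (p q : MonoidAlgebra ℤ Γ) {m k : ℤ}
    (hm : ∀ x ∈ p.coeff.support, d x ≤ m) (hk : ∀ y ∈ q.coeff.support, d y ≤ k)
    (hd : ∀ x ∈ p.coeff.support, ∀ y ∈ q.coeff.support, d (x * y) = d x + d y)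
    (hpq : p * q = 0) {P Q : MonoidAlgebra ℤ Γ}
    (hP : P = MonoidAlgebra.ofCoeff (p.coeff.filter (fun x => d x = m))) (hQ : Q = MonoidAlgebra.ofCoeff (q.coeff.filter (fun y => d y = k))) :
    P * Q = 0 := by
  set R : MonoidAlgebra ℤ Γ := MonoidAlgebra.ofCoeff (p.coeff.filter (fun x => ¬ d x = m)) with hR
  set S : MonoidAlgebra ℤ Γ := MonoidAlgebra.ofCoeff (q.coeff.filter (fun y => ¬ d y = k)) with hS
  have hpPR : P + R = p := by rw [hP]; exact congrArg MonoidAlgebra.ofCoeff (Finsupp.filter_pos_add_filter_neg p.coeff _)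
  have hqQS : Q + S = q := by rw [hQ]; exact congrArg MonoidAlgebra.ofCoeff (Finsupp.filter_pos_add_filter_neg q.coeff _)
  have hrest : P * Q + (P * S + R * Q + R * S) = 0 := by
    have h0 : (P + R) * (Q + S) = 0 := by rw [hpPR, hqQS]; exact hpq
    rw [add_mul, mul_add, mul_add] at h0
    rw [← h0]; abel
  have hPs : P.coeff.support ⊆ p.coeff.support := by
    intro x hx; rw [hP, MonoidAlgebra.coeff_ofCoeff, Finsupp.support_filter, Finset.mem_filter] at hx; exact hx.1
  have hQs : Q.coeff.support ⊆ q.coeff.support := by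
    intro x hx; rw [hQ, MonoidAlgebra.coeff_ofCoeff, Finsupp.support_filter, Finset.mem_filter] at hx; exact hx.1
  have hRs : R.coeff.support ⊆ p.coeff.support := by
    intro x hx; rw [hR, MonoidAlgebra.coeff_ofCoeff, Finsupp.support_filter, Finset.mem_filter] at hx; exact hx.1
  have hSs : S.coeff.support ⊆ q.coeff.support := by
    intro x hx; rw [hS, MonoidAlgebra.coeff_ofCoeff, Finsupp.support_filter, Finset.mem_filter] at hx; exact hx.1
  have hPd : ∀ x ∈ P.coeff.support, d x = m := by
    intro x hx; rw [hP, MonoidAlgebra.coeff_ofCoeff, Finsupp.support_filter, Finset.mem_filter] at hx; exact hx.2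
  have hQd : ∀ y ∈ Q.coeff.support, d y = k := by
    intro y hy; rw [hQ, MonoidAlgebra.coeff_ofCoeff, Finsupp.support_filter, Finset.mem_filter] at hy; exact hy.2
  have hRd : ∀ x ∈ R.coeff.support, d x < m := by
    intro x hx; rw [hR, MonoidAlgebra.coeff_ofCoeff, Finsupp.support_filter, Finset.mem_filter] at hx
    exact lt_of_le_of_ne (hm x hx.1) hx.2
  have hSd : ∀ y ∈ S.coeff.support, d y < k := by
    intro y hy; rw [hS, MonoidAlgebra.coeff_ofCoeff, Finsupp.support_filter, Finset.mem_filter] at hy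
    exact lt_of_le_of_ne (hk y hy.1) hy.2
  have htop : ∀ z ∈ (P * Q).coeff.support, d z = m + k := by
    intro z hz
    obtain ⟨x, hx, y, hy, rfl⟩ := Finset.mem_mul.mp (MonoidAlgebra.support_coeff_mul_subset P Q hz)
    rw [hd x (hPs hx) y (hQs hy), hPd x hx, hQd y hy]
  have hlow : ∀ z ∈ (P * S + R * Q + R * S).coeff.support, d z < m + k := by
    intro z hz
    rw [MonoidAlgebra.coeff_add] at hz
    rcases Finset.mem_union.mp (Finsupp.support_add hz) with h | h
    · rw [MonoidAlgebra.coeff_add] at h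
      rcases Finset.mem_union.mp (Finsupp.support_add h) with h' | h'
      · obtain ⟨x, hx, y, hy, rfl⟩ := Finset.mem_mul.mp (MonoidAlgebra.support_coeff_mul_subset P S h')
        rw [hd x (hPs hx) y (hSs hy)]
        have := hPd x hx; have := hSd y hy; omega
      · obtain ⟨x, hx, y, hy, rfl⟩ := Finset.mem_mul.mp (MonoidAlgebra.support_coeff_mul_subset R Q h')
        rw [hd x (hRs hx) y (hQs hy)]
        have := hRd x hx; have := hQd y hy; omega
    · obtain ⟨x, hx, y, hy, rfl⟩ := Finset.mem_mul.mp (MonoidAlgebra.support_coeff_mul_subset R S h)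
      rw [hd x (hRs hx) y (hSs hy)]
      have := hRd x hx; have := hSd y hy; omega
  have hsupp : (P * Q).coeff.support = ∅ := by
    rw [Finset.eq_empty_iff_forall_notMem]
    intro z hz
    have h1 := htop z hz
    have hneg : P * Q = -(P * S + R * Q + R * S) := eq_neg_of_add_eq_zero_left hrest
    rw [hneg] at hz
    rw [MonoidAlgebra.coeff_neg, Finsupp.support_neg] at hz
    exact absurd h1 (ne_of_lt (hlow z hz))
  exact MonoidAlgebra.coeff_eq_zero.mp (Finsupp.support_eq_empty.mp hsupp)

end OreLitfa

namespace OreLitfa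

variable {Γ : Type*} [Group Γ]

open scoped Classical in
theorem domain_aux
    (hli : ∀ H : Subgroup Γ, H ≠ ⊥ → H.FG →
      ∃ φ : H →* Multiplicative ℤ, Function.Surjective φ) :
    ∀ n : ℕ, ∀ p q : MonoidAlgebra ℤ Γ, p.coeff.support.card + q.coeff.support.card ≤ n →
      p ≠ 0 → q ≠ 0 → p * q ≠ 0 := by
  intro n
  induction n using Nat.strong_induction_on with
  | _ n IH =>
  intro p q hcard hp hq hpq
  obtain ⟨g, hg⟩ := Finset.Nonempty.exists_mem (Finsupp.support_nonempty_iff.mpr (mt MonoidAlgebra.coeff_eq_zero.mp hp))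
  obtain ⟨h, hh⟩ := Finset.Nonempty.exists_mem (Finsupp.support_nonempty_iff.mpr (mt MonoidAlgebra.coeff_eq_zero.mp hq))
  set p₁ : MonoidAlgebra ℤ Γ := MonoidAlgebra.single g⁻¹ (1:ℤ) * p with hp₁def
  set q₁ : MonoidAlgebra ℤ Γ := q * MonoidAlgebra.single h⁻¹ (1:ℤ) with hq₁def
  have hps : p₁.coeff.support = p.coeff.support.image (g⁻¹ * ·) := support_single_mul _ _
  have hqs : q₁.coeff.support = q.coeff.support.image (· * h⁻¹) := support_mul_single _ _
  have hpc : p₁.coeff.support.card = p.coeff.support.card := by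
    rw [hps]; exact Finset.card_image_of_injective _ (mul_right_injective g⁻¹)
  have hqc : q₁.coeff.support.card = q.coeff.support.card := by
    rw [hqs]; exact Finset.card_image_of_injective _ (mul_left_injective h⁻¹)
  have h1p : (1:Γ) ∈ p₁.coeff.support := by
    rw [hps, Finset.mem_image]; exact ⟨g, hg, by group⟩
  have h1q : (1:Γ) ∈ q₁.coeff.support := by
    rw [hqs, Finset.mem_image]; exact ⟨h, hh, by group⟩
  have hp₁ : p₁ ≠ 0 := by
    intro h0; rw [← MonoidAlgebra.coeff_eq_zero, ← Finsupp.support_eq_empty] at h0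
    rw [h0] at h1p; simp at h1p
  have hq₁ : q₁ ≠ 0 := by
    intro h0; rw [← MonoidAlgebra.coeff_eq_zero, ← Finsupp.support_eq_empty] at h0
    rw [h0] at h1q; simp at h1q
  have hpq₁ : p₁ * q₁ = 0 := by
    rw [hp₁def, hq₁def, mul_assoc, ← mul_assoc p, hpq, zero_mul, mul_zero]
  set Sset : Set Γ := ↑(p₁.coeff.support ∪ q₁.coeff.support) with hSset
  set H : Subgroup Γ := Subgroup.closure Sset with hHdef
  have hmemp : ∀ x ∈ p₁.coeff.support, x ∈ H := fun x hx =>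
    Subgroup.subset_closure (by rw [hSset]; exact_mod_cast Finset.mem_union_left _ hx)
  have hmemq : ∀ y ∈ q₁.coeff.support, y ∈ H := fun y hy =>
    Subgroup.subset_closure (by rw [hSset]; exact_mod_cast Finset.mem_union_right _ hy)
  by_cases hH : H = ⊥
  · -- supports are {1}
    have hsub : p₁.coeff.support ⊆ {1} := by
      intro x hx
      have := hmemp x hx; rw [hH, Subgroup.mem_bot] at this
      simpa using this
    have hsub' : q₁.coeff.support ⊆ {1} := by
      intro x hx
      have := hmemq x hx; rw [hH, Subgroup.mem_bot] at this
      simpa using this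
    have hps1 : p₁.coeff = Finsupp.single 1 (p₁.coeff 1) := Finsupp.support_subset_singleton.mp hsub
    have hqs1 : q₁.coeff = Finsupp.single 1 (q₁.coeff 1) := Finsupp.support_subset_singleton.mp hsub'
    have hc : p₁.coeff 1 ≠ 0 := Finsupp.mem_support_iff.mp h1p
    have hc' : q₁.coeff 1 ≠ 0 := Finsupp.mem_support_iff.mp h1q
    have : p₁ * q₁ = MonoidAlgebra.single 1 (p₁.coeff 1 * q₁.coeff 1) := by
      conv_lhs => rw [← MonoidAlgebra.ofCoeff_coeff p₁, ← MonoidAlgebra.ofCoeff_coeff q₁, hps1, hqs1]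
      rw [MonoidAlgebra.ofCoeff_single,
        MonoidAlgebra.ofCoeff_single,
        MonoidAlgebra.single_mul_single, one_mul]
    rw [hpq₁] at this
    exact mul_ne_zero hc hc' (MonoidAlgebra.single_eq_zero.mp this.symm)
  · have hFG : H.FG := by
      rw [Subgroup.fg_iff]
      exact ⟨Sset, hHdef.symm, by rw [hSset]; exact Finset.finite_toSet _⟩
    obtain ⟨φ, hφ⟩ := hli H hH hFG
    set d : Γ → ℤ := fun x => if hx : x ∈ H then Multiplicative.toAdd (φ ⟨x, hx⟩) else 0 with hd
    have hdval : ∀ (x : Γ) (hx : x ∈ H), d x = Multiplicative.toAdd (φ ⟨x, hx⟩) := by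
      intro x hx; rw [hd]; simp [hx]
    have hdadd : ∀ x ∈ p₁.coeff.support, ∀ y ∈ q₁.coeff.support, d (x * y) = d x + d y := by
      intro x hx y hy
      have hxH := hmemp x hx; have hyH := hmemq y hy
      rw [hdval x hxH, hdval y hyH, hdval (x*y) (mul_mem hxH hyH)]
      have : (⟨x * y, mul_mem hxH hyH⟩ : H) = ⟨x, hxH⟩ * ⟨y, hyH⟩ := rfl
      rw [this, map_mul]
      rfl
    have hnp := Finsupp.support_nonempty_iff.mpr (mt MonoidAlgebra.coeff_eq_zero.mp hp₁)
    have hnq := Finsupp.support_nonempty_iff.mpr (mt MonoidAlgebra.coeff_eq_zero.mp hq₁)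
    set mm : ℤ := p₁.coeff.support.sup' hnp d with hmm
    set kk : ℤ := q₁.coeff.support.sup' hnq d with hkk
    have hmle : ∀ x ∈ p₁.coeff.support, d x ≤ mm := fun x hx => Finset.le_sup' d hx
    have hkle : ∀ y ∈ q₁.coeff.support, d y ≤ kk := fun y hy => Finset.le_sup' d hy
    obtain ⟨x₀, hx₀, hx₀d⟩ := Finset.exists_mem_eq_sup' hnp d
    obtain ⟨y₀, hy₀, hy₀d⟩ := Finset.exists_mem_eq_sup' hnq d
    set P : MonoidAlgebra ℤ Γ := MonoidAlgebra.ofCoeff (p₁.coeff.filter (fun x => d x = mm)) with hPdef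
    set Q : MonoidAlgebra ℤ Γ := MonoidAlgebra.ofCoeff (q₁.coeff.filter (fun y => d y = kk)) with hQdef
    have hPQ : P * Q = 0 := top_mul d p₁ q₁ hmle hkle hdadd hpq₁ hPdef hQdef
    have hPsupp : P.coeff.support = p₁.coeff.support.filter (fun x => d x = mm) := by
      rw [hPdef]; exact Finsupp.support_filter _ _
    have hQsupp : Q.coeff.support = q₁.coeff.support.filter (fun y => d y = kk) := by
      rw [hQdef]; exact Finsupp.support_filter _ _
    have hPne : P ≠ 0 := by
      intro h0
      have : x₀ ∈ P.coeff.support := by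
        rw [hPsupp, Finset.mem_filter]; exact ⟨hx₀, hx₀d.symm⟩
      rw [h0] at this; simp at this
    have hQne : Q ≠ 0 := by
      intro h0
      have : y₀ ∈ Q.coeff.support := by
        rw [hQsupp, Finset.mem_filter]; exact ⟨hy₀, hy₀d.symm⟩
      rw [h0] at this; simp at this
    have hPle : P.coeff.support.card ≤ p₁.coeff.support.card := by
      rw [hPsupp]; exact Finset.card_filter_le _ _
    have hQle : Q.coeff.support.card ≤ q₁.coeff.support.card := by
      rw [hQsupp]; exact Finset.card_filter_le _ _
    by_cases hlt : P.coeff.support.card + Q.coeff.support.card < p₁.coeff.support.card + q₁.coeff.support.card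
    · have hn : P.coeff.support.card + Q.coeff.support.card < n := by
        have : p₁.coeff.support.card + q₁.coeff.support.card ≤ n := by rw [hpc, hqc]; exact hcard
        omega
      exact IH _ hn P Q le_rfl hPne hQne hPQ
    · -- equality case: d is constant on both supports, hence zero (1 is in supports)
      have hPcard : P.coeff.support.card = p₁.coeff.support.card := by omega
      have hQcard : Q.coeff.support.card = q₁.coeff.support.card := by omega
      have hPeq : P.coeff.support = p₁.coeff.support := by
        apply Finset.eq_of_subset_of_card_le
        · rw [hPsupp]; exact Finset.filter_subset _ _
        · omega
      have hQeq : Q.coeff.support = q₁.coeff.support := by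
        apply Finset.eq_of_subset_of_card_le
        · rw [hQsupp]; exact Finset.filter_subset _ _
        · omega
      have hdp : ∀ x ∈ p₁.coeff.support, d x = mm := by
        intro x hx
        rw [← hPeq, hPsupp, Finset.mem_filter] at hx; exact hx.2
      have hdq : ∀ y ∈ q₁.coeff.support, d y = kk := by
        intro y hy
        rw [← hQeq, hQsupp, Finset.mem_filter] at hy; exact hy.2
      have hd1 : d 1 = 0 := by
        rw [hdval 1 (one_mem H)]
        have : (⟨(1:Γ), one_mem H⟩ : H) = 1 := rfl
        rw [this, map_one]; rfl
      have hmm0 : mm = 0 := by rw [← hdp 1 h1p, hd1]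
      have hkk0 : kk = 0 := by rw [← hdq 1 h1q, hd1]
      -- φ vanishes on generators, hence is trivial, contradicting surjectivity
      have hker : ∀ x ∈ Sset, x ∈ (φ.ker.map H.subtype : Subgroup Γ) := by
        intro x hx
        have hxH : x ∈ H := Subgroup.subset_closure hx
        have hdx : d x = 0 := by
          rw [hSset] at hx
          rcases Finset.mem_union.mp (by exact_mod_cast hx) with h' | h'
          · rw [hdp x h', hmm0]
          · rw [hdq x h', hkk0]
        rw [hdval x hxH] at hdx
        have hk1 : (⟨x, hxH⟩ : H) ∈ φ.ker := by
          rw [MonoidHom.mem_ker]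
          have heq : φ ⟨x, hxH⟩ = Multiplicative.ofAdd (Multiplicative.toAdd (φ ⟨x, hxH⟩)) := rfl
          rw [heq, hdx]; rfl
        exact Subgroup.mem_map.mpr ⟨⟨x, hxH⟩, hk1, rfl⟩
      have hle : H ≤ φ.ker.map H.subtype := by
        show Subgroup.closure Sset ≤ _
        exact (Subgroup.closure_le _).mpr hker
      have htriv : ∀ w : H, φ w = 1 := by
        intro w
        obtain ⟨w', hw', hww⟩ := hle w.2
        have : w' = w := Subtype.ext hww
        rw [← this]; exact hw'
      obtain ⟨w, hw⟩ := hφ (Multiplicative.ofAdd 1)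
      rw [htriv w] at hw
      have : (1:ℤ) = 0 := by
        have := congrArg Multiplicative.toAdd hw
        simpa using this.symm
      exact absurd this one_ne_zero

theorem domain
    (hli : ∀ H : Subgroup Γ, H ≠ ⊥ → H.FG →
      ∃ φ : H →* Multiplicative ℤ, Function.Surjective φ)
    {p q : MonoidAlgebra ℤ Γ} (hp : p ≠ 0) (hq : q ≠ 0) : p * q ≠ 0 :=
  domain_aux hli (p.coeff.support.card + q.coeff.support.card) p q le_rfl hp hq

end OreLitfa

namespace OreLitfa

variable {Γ : Type*} [Group Γ]

/-- The indicator function of a set, as an element of `BoundedFun`. -/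
noncomputable def ind (A : Set Γ) : BoundedFun Γ :=
  ⟨A.indicator 1, ⟨1, fun x => by
    by_cases h : x ∈ A <;> simp [Set.indicator_apply, h]⟩⟩

variable (m : BoundedFun Γ →ₗ[ℝ] ℝ)

/-- Finitely additive measure induced by a mean. -/
noncomputable def mu (A : Set Γ) : ℝ := m (ind A)

variable {m}

lemma mu_nonneg (hm : IsInvariantMean Γ m) (A : Set Γ) : 0 ≤ mu m A := by
  apply hm.1
  intro x
  by_cases h : x ∈ A <;> simp [ind, Set.indicator_apply, h]

lemma mu_univ (hm : IsInvariantMean Γ m) : mu m (Set.univ : Set Γ) = 1 := by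
  have : ind (Set.univ : Set Γ) =
      ⟨fun _ => (1 : ℝ), ⟨1, fun x => by norm_num⟩⟩ := by
    apply Subtype.ext
    funext x
    simp [ind]
  rw [mu, this]
  exact hm.2.1

lemma mu_union {A B : Set Γ} (h : Disjoint A B) :
    mu m (A ∪ B) = mu m A + mu m B := by
  have : ind (A ∪ B) = ind A + ind B := by
    apply Subtype.ext
    show (A ∪ B).indicator (1 : Γ → ℝ) = A.indicator (1 : Γ → ℝ) + B.indicator (1 : Γ → ℝ)
    exact Set.indicator_union_of_disjoint h (1 : Γ → ℝ)
  rw [mu, this, map_add]; rfl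

lemma mu_mono (hm : IsInvariantMean Γ m) {A B : Set Γ} (h : A ⊆ B) : mu m A ≤ mu m B := by
  have h0 : 0 ≤ m (ind B - ind A) := by
    apply hm.1
    intro x
    show 0 ≤ B.indicator (1 : Γ → ℝ) x - A.indicator (1 : Γ → ℝ) x
    by_cases hx : x ∈ A
    · simp [Set.indicator_apply, hx, h hx]
    · by_cases hx' : x ∈ B <;> simp [Set.indicator_apply, hx, hx']
  rw [map_sub] at h0
  have : mu m A = m (ind A) := rfl
  have : mu m B = m (ind B) := rfl
  rw [mu, mu]
  linarith [h0]

lemma mu_translate (hm : IsInvariantMean Γ m) (g : Γ) (A : Set Γ) : mu m ((g * ·) '' A) = mu m A := by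
  have key := hm.2.2 g (ind A)
  have : (⟨fun x => (ind A : Γ → ℝ) (g⁻¹ * x), by
      obtain ⟨C, hC⟩ := (ind A).2
      exact ⟨C, fun x => hC _⟩⟩ : BoundedFun Γ) = ind ((g * ·) '' A) := by
    apply Subtype.ext
    funext x
    show A.indicator (1 : Γ → ℝ) (g⁻¹ * x) = ((g * ·) '' A).indicator (1 : Γ → ℝ) x
    by_cases h : g⁻¹ * x ∈ A
    · have : x ∈ (g * ·) '' A := ⟨g⁻¹ * x, h, by group⟩
      simp [Set.indicator_apply, h, this]
    · have : x ∉ (g * ·) '' A := by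
        rintro ⟨y, hy, rfl⟩
        exact h (by simpa using hy)
      simp [Set.indicator_apply, h, this]
  rw [this] at key
  exact key

lemma mu_biUnion (hm : IsInvariantMean Γ m) {β : Type*} (I : Finset β) (S : β → Set Γ)
    (hdis : ∀ b ∈ I, ∀ b' ∈ I, b ≠ b' → Disjoint (S b) (S b')) :
    mu m (⋃ b ∈ I, S b) = ∑ b ∈ I, mu m (S b) := by
  classical
  induction I using Finset.induction_on with
  | empty =>
    simp only [Finset.notMem_empty, Set.iUnion_of_empty, Set.iUnion_empty, Finset.sum_empty]
    have : ind (∅ : Set Γ) = 0 := by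
      apply Subtype.ext; funext x; simp [ind]
    rw [mu, this, map_zero]
  | insert _ _ hnotmem ih =>
    rename_i a I'
    rw [Finset.sum_insert hnotmem]
    have hd : Disjoint (S a) (⋃ b ∈ I', S b) := by
      rw [Set.disjoint_iUnion₂_right]
      intro b hb
      exact hdis a (Finset.mem_insert_self a I') b (Finset.mem_insert_of_mem hb)
        (fun hab => hnotmem (hab ▸ hb))
    have hun : (⋃ b ∈ insert a I', S b) = S a ∪ ⋃ b ∈ I', S b := by
      simp
    rw [hun, mu_union hd, ih (fun b hb b' hb' hne =>
      hdis b (Finset.mem_insert_of_mem hb) b' (Finset.mem_insert_of_mem hb') hne)]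

open scoped Pointwise in
open scoped Classical in
lemma exists_small_doubling (hm : IsInvariantMean Γ m) (T : Finset Γ) :
    ∃ F E : Finset Γ, (∀ g ∈ T, ∀ x ∈ F, g * x ∈ E) ∧ E.card < 2 * F.card := by
  by_contra hcon
  push_neg at hcon
  have hcon : ∀ F : Finset Γ, 2 * F.card ≤ (T * F).card := by
    intro F
    by_contra hlt
    push_neg at hlt
    exact absurd hlt (not_lt.mpr (hcon F (T * F) (fun g hg x hx => Finset.mul_mem_mul hg hx)))
  -- Hall condition for the bipartite graph on (Γ × Fin 2) vs Γ
  set t : Γ × Fin 2 → Finset Γ := fun z => T.image (· * z.1) with ht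
  have hall : ∀ s : Finset (Γ × Fin 2), s.card ≤ (s.biUnion t).card := by
    intro s
    set F : Finset Γ := s.image Prod.fst with hF
    have hbi : s.biUnion t = T * F := by
      ext y
      simp only [Finset.mem_biUnion, ht, Finset.mem_image, Finset.mem_mul, hF]
      constructor
      · rintro ⟨z, hz, g, hg, rfl⟩
        exact ⟨g, hg, z.1, ⟨z, hz, rfl⟩, rfl⟩
      · rintro ⟨g, hg, x, ⟨z, hz, rfl⟩, rfl⟩
        exact ⟨z, hz, g, hg, rfl⟩
    have hsub : s ⊆ F ×ˢ (Finset.univ : Finset (Fin 2)) := by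
      intro z hz
      rw [Finset.mem_product]
      exact ⟨Finset.mem_image_of_mem _ hz, Finset.mem_univ _⟩
    calc s.card ≤ (F ×ˢ (Finset.univ : Finset (Fin 2))).card := Finset.card_le_card hsub
      _ = 2 * F.card := by rw [Finset.card_product]; simp [mul_comm]
      _ ≤ (T * F).card := hcon F
      _ = (s.biUnion t).card := by rw [hbi]
  obtain ⟨f, hfinj, hf⟩ := (Finset.all_card_le_biUnion_card_iff_exists_injective t).mp hall
  -- choice of the translating element
  have hchoice : ∀ z : Γ × Fin 2, ∃ g ∈ T, g * z.1 = f z := by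
    intro z
    have := hf z
    rw [ht] at this
    simpa using Finset.mem_image.mp this
  set c : Γ × Fin 2 → Γ := fun z => (hchoice z).choose with hc
  have hcT : ∀ z, c z ∈ T := fun z => (hchoice z).choose_spec.1
  have hcf : ∀ z, c z * z.1 = f z := fun z => (hchoice z).choose_spec.2
  set A : Γ → Fin 2 → Set Γ := fun g i => {x | c (x, i) = g} with hA
  -- for each i, the A g i partition Γ
  have hcover : ∀ i : Fin 2, (⋃ g ∈ T, A g i) = Set.univ := by
    intro i
    ext x
    simp only [Set.mem_iUnion, Set.mem_univ, iff_true]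
    exact ⟨c (x, i), hcT (x, i), rfl⟩
  have hAdis : ∀ i : Fin 2, ∀ g ∈ T, ∀ g' ∈ T, g ≠ g' → Disjoint (A g i) (A g' i) := by
    intro i g _ g' _ hne
    rw [Set.disjoint_left]
    rintro x hx hx'
    exact hne (hx.symm.trans hx')
  have hsum1 : ∀ i : Fin 2, ∑ g ∈ T, mu m (A g i) = 1 := by
    intro i
    rw [← mu_biUnion hm T (fun g => A g i) (hAdis i), hcover i, mu_univ hm]
  -- translated sets are pairwise disjoint
  set B : Γ → Fin 2 → Set Γ := fun g i => (g * ·) '' A g i with hB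
  have hBdis : ∀ z ∈ T ×ˢ (Finset.univ : Finset (Fin 2)),
      ∀ z' ∈ T ×ˢ (Finset.univ : Finset (Fin 2)), z ≠ z' →
      Disjoint (B z.1 z.2) (B z'.1 z'.2) := by
    rintro ⟨g, i⟩ hz ⟨g', i'⟩ hz' hne
    rw [Set.disjoint_left]
    rintro y ⟨x, hx, rfl⟩ ⟨x', hx', hxy⟩
    have hcx : c (x, i) = g := hx
    have hcx' : c (x', i') = g' := hx'
    have hfy : f (x, i) = f (x', i') := by
      rw [← hcf (x, i), ← hcf (x', i')]
      simp only [hcx, hcx']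
      exact hxy.symm
    have := hfinj hfy
    apply hne
    obtain ⟨h1, h2⟩ := Prod.mk.injEq .. ▸ this
    · exact Prod.ext (by rw [← hcx, ← hcx', h1, h2]) h2
  have hsum2 : ∑ z ∈ T ×ˢ (Finset.univ : Finset (Fin 2)), mu m (B z.1 z.2) ≤ 1 := by
    rw [← mu_biUnion hm _ _ hBdis]
    rw [← mu_univ hm (Γ := Γ)]
    apply mu_mono hm
    exact Set.subset_univ _
  have hBA : ∀ g i, mu m (B g i) = mu m (A g i) := fun g i => mu_translate hm g (A g i)
  have : (2 : ℝ) ≤ 1 := by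
    calc (2 : ℝ) = ∑ i : Fin 2, (1 : ℝ) := by simp
      _ = ∑ i : Fin 2, ∑ g ∈ T, mu m (A g i) := by
          refine Finset.sum_congr rfl fun i _ => (hsum1 i).symm
      _ = ∑ z ∈ T ×ˢ (Finset.univ : Finset (Fin 2)), mu m (A z.1 z.2) := by
          rw [Finset.sum_product]
          rw [Finset.sum_comm]
      _ = ∑ z ∈ T ×ˢ (Finset.univ : Finset (Fin 2)), mu m (B z.1 z.2) := by
          refine Finset.sum_congr rfl fun z _ => (hBA z.1 z.2).symm
      _ ≤ 1 := hsum2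
  linarith

/-- The embedding of `F`-supported vectors into the monoid algebra. -/
noncomputable def emb (F : Finset Γ) : (↥F → ℤ) →ₗ[ℤ] MonoidAlgebra ℤ Γ where
  toFun x := ∑ g : F, MonoidAlgebra.single (g : Γ) (x g)
  map_add' x y := by
    simp only [Pi.add_apply, MonoidAlgebra.single_add]
    rw [Finset.sum_add_distrib]
  map_smul' c x := by
    simp only [Pi.smul_apply, smul_eq_mul, RingHom.id_apply]
    rw [Finset.smul_sum]
    congr 1
    funext g
    rw [MonoidAlgebra.smul_single]
    norm_num

open scoped Classical in
lemma emb_apply_mem (F : Finset Γ) (x : ↥F → ℤ) (g : ↥F) :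
    (emb F x : MonoidAlgebra ℤ Γ).coeff ↑g = x g := by
  show (∑ g' : F, MonoidAlgebra.single (g' : Γ) (x g')).coeff ↑g = x g
  rw [MonoidAlgebra.coeff_sum, Finsupp.finset_sum_apply]
  rw [Finset.sum_eq_single g]
  · simp
  · intro g' _ hne
    rw [MonoidAlgebra.coeff_single_apply]
    rw [if_neg (fun h => hne (Subtype.ext h))]
  · intro h
    exact absurd (Finset.mem_univ g) h

lemma emb_eq_zero {F : Finset Γ} {x : ↥F → ℤ} (h : emb F x = 0) : x = 0 := by
  funext g
  have := emb_apply_mem F x g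
  rw [h] at this
  simpa using this.symm

lemma emb_support (F : Finset Γ) (x : ↥F → ℤ) :
    (emb F x : MonoidAlgebra ℤ Γ).coeff.support ⊆ F := by
  classical
  show (∑ g' : F, MonoidAlgebra.single (g' : Γ) (x g')).coeff.support ⊆ F
  rw [MonoidAlgebra.coeff_sum]
  refine (Finsupp.support_finset_sum).trans ?_
  intro g hg
  rw [Finset.mem_biUnion] at hg
  obtain ⟨g', _, hg'⟩ := hg
  have := Finsupp.support_single_subset hg'
  rw [Finset.mem_singleton] at this
  rw [this]
  exact g'.2

open scoped Classical in
lemma ore_step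
    (hli : ∀ H : Subgroup Γ, H ≠ ⊥ → H.FG →
      ∃ φ : H →* Multiplicative ℤ, Function.Surjective φ)
    (hm : IsInvariantMean Γ m) :
    ∀ a s : MonoidAlgebra ℤ Γ, s ≠ 0 →
      ∃ (b t : MonoidAlgebra ℤ Γ), t ≠ 0 ∧ a * t = s * b := by
  intro a s hs
  by_cases ha : a = 0
  · exact ⟨0, 1, one_ne_zero, by rw [ha, zero_mul, mul_zero]⟩
  obtain ⟨F, E, hTE, hcard⟩ := exists_small_doubling hm (a.coeff.support ∪ s.coeff.support)
  -- the linear map whose kernel gives the Ore pair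
  set N : ((↥F → ℤ) × (↥F → ℤ)) →ₗ[ℤ] MonoidAlgebra ℤ Γ :=
    (LinearMap.mulLeft ℤ a).comp ((emb F).comp (LinearMap.fst ℤ _ _)) -
    (LinearMap.mulLeft ℤ s).comp ((emb F).comp (LinearMap.snd ℤ _ _)) with hN
  have hNval : ∀ z, N z = a * emb F z.1 - s * emb F z.2 := by
    intro z; rfl
  set L : ((↥F → ℤ) × (↥F → ℤ)) →ₗ[ℤ] (↥E → ℤ) :=
    (LinearMap.pi (fun e : ↥E => (Finsupp.lapply (e : Γ)).comp (MonoidAlgebra.coeffLinearEquiv ℤ).toLinearMap)).comp N with hL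
  have hLval : ∀ z (e : ↥E), L z e = (a * emb F z.1 - s * emb F z.2).coeff (e : Γ) := by
    intro z e; rfl
  have hnotinj : ¬ Function.Injective L := by
    intro hinj
    have h1 := LinearMap.finrank_le_finrank_of_injective hinj
    rw [Module.finrank_prod, Module.finrank_pi, Module.finrank_pi,
      Fintype.card_coe, Fintype.card_coe] at h1
    omega
  have hker : LinearMap.ker L ≠ ⊥ := fun h => hnotinj (LinearMap.ker_eq_bot.mp h)
  obtain ⟨z, hzker, hzne⟩ := Submodule.ne_bot_iff _ |>.mp hker
  have hz0 : ∀ e : ↥E, (a * emb F z.1 - s * emb F z.2).coeff (e : Γ) = 0 := by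
    intro e
    have hLz : L z = 0 := LinearMap.mem_ker.mp hzker
    have := congrFun hLz e
    rw [hLval z e] at this
    exact this
  -- the difference is supported in E, hence vanishes
  set w : MonoidAlgebra ℤ Γ := a * emb F z.1 - s * emb F z.2 with hw
  have hwsupp : w.coeff.support ⊆ E := by
    rw [hw, MonoidAlgebra.coeff_sub]
    refine (Finsupp.support_sub).trans ?_
    apply Finset.union_subset
    · refine (MonoidAlgebra.support_coeff_mul_subset a (emb F z.1)).trans ?_
      intro u hu
      obtain ⟨x, hx, y, hy, rfl⟩ := Finset.mem_mul.mp hu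
      exact hTE x (Finset.mem_union_left _ hx) y (emb_support F z.1 hy)
    · refine (MonoidAlgebra.support_coeff_mul_subset s (emb F z.2)).trans ?_
      intro u hu
      obtain ⟨x, hx, y, hy, rfl⟩ := Finset.mem_mul.mp hu
      exact hTE x (Finset.mem_union_right _ hx) y (emb_support F z.2 hy)
  have hwzero : w = 0 := by
    ext u
    by_cases hu : u ∈ E
    · exact hz0 ⟨u, hu⟩
    · by_contra hne
      exact hu (hwsupp (Finsupp.mem_support_iff.mpr hne))
  have heq : a * emb F z.1 = s * emb F z.2 := by
    have := sub_eq_zero.mp hwzero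
    exact this
  have htne : emb F z.1 ≠ 0 := by
    intro h0
    have hx0 : z.1 = 0 := emb_eq_zero h0
    have : s * emb F z.2 = 0 := by rw [← heq, h0, mul_zero]
    have hy0 : z.2 = 0 := emb_eq_zero (by
      by_contra hne
      exact domain hli hs hne this)
    exact hzne (Prod.ext hx0 hy0)
  exact ⟨emb F z.2, emb F z.1, htne, heq⟩

end OreLitfa

/-- **Theorem 2.4(2), Ore part.** If `Γ` is a countable LITFA group (locally indicable,
torsion-free, amenable), then the set of non-zero elements of the integral group ring `ℤ[Γ]`
satisfies the right Ore condition: for every `a` and every non-zero `s` there are `b` and a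
non-zero `t` with `a * t = s * b`. -/
theorem MonoidAlgebra.right_ore_condition_of_litfa {Γ : Type*} [Group Γ] [Countable Γ]
    (htf : ∀ (g : Γ) (n : ℕ), 1 ≤ n → g ^ n = 1 → g = 1)
    (hli : ∀ H : Subgroup Γ, H ≠ ⊥ → H.FG →
      ∃ φ : H →* Multiplicative ℤ, Function.Surjective φ)
    (ham : IsAmenable Γ) :
    ∀ a s : MonoidAlgebra ℤ Γ, s ≠ 0 →
      ∃ (b t : MonoidAlgebra ℤ Γ), t ≠ 0 ∧ a * t = s * b := by
  obtain ⟨m, hm⟩ := ham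
  exact OreLitfa.ore_step hli hm
end

section
/- Let G be a group and N a normal subgroup of G. If both N and the quotient group G/N are locally indicable, then G is locally indicable. (Local indicability is closed under extensions; this is the inductive step in showing that PTFA groups are locally indicable.) -/
/-- A group is locally indicable if every nontrivial finitely generated subgroup admits a
surjective homomorphism onto `ℤ`. -/
def LocallyIndicable (G : Type*) [Group G] : Prop :=
  ∀ H : Subgroup G, H ≠ ⊥ → H.FG → ∃ φ : H →* Multiplicative ℤ, Function.Surjective φ

theorem Subgroup.FG.map' {G G' : Type*} [Group G] [Group G'] {H : Subgroup G} (h : H.FG)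
    (f : G →* G') : (H.map f).FG := by
  classical
  obtain ⟨S, hS⟩ := h
  exact ⟨S.image f, by rw [Finset.coe_image, ← MonoidHom.map_closure, hS]⟩

/-- **Local indicability is closed under extensions.**  If `N` is a normal subgroup of `G` such
that both `N` and `G/N` are locally indicable, then `G` is locally indicable. -/
theorem locallyIndicable_of_normal_of_quotient {G : Type*} [Group G] (N : Subgroup G)
    [N.Normal] (hN : LocallyIndicable N) (hQ : LocallyIndicable (G ⧸ N)) :
    LocallyIndicable G := by
  intro H hH hHfg
  by_cases himg : H.map (QuotientGroup.mk' N) = ⊥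
  · -- image is trivial, so H ≤ N
    have hle : H ≤ N := by
      intro x hx
      have hmem : QuotientGroup.mk' N x ∈ H.map (QuotientGroup.mk' N) :=
        ⟨x, hx, rfl⟩
      rw [himg, Subgroup.mem_bot] at hmem
      exact (QuotientGroup.eq_one_iff x).mp hmem
    let e := Subgroup.subgroupOfEquivOfLe hle
    have hfg' : (H.subgroupOf N).FG := by
      rw [← Group.fg_iff_subgroup_fg] at hHfg ⊢
      exact Group.fg_of_surjective (f := e.symm.toMonoidHom) e.symm.surjective
    have hne' : H.subgroupOf N ≠ ⊥ := by
      obtain ⟨x, hx, hx1⟩ := (Subgroup.bot_or_exists_ne_one H).resolve_left hH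
      intro hbot
      have hmem : (⟨x, hle hx⟩ : N) ∈ H.subgroupOf N := by
        simpa [Subgroup.mem_subgroupOf] using hx
      rw [hbot, Subgroup.mem_bot] at hmem
      exact hx1 (by simpa using congrArg (fun y : N => (y : G)) hmem)
    obtain ⟨ψ, hψ⟩ := hN _ hne' hfg'
    exact ⟨ψ.comp e.symm.toMonoidHom, hψ.comp e.symm.surjective⟩
  · obtain ⟨φ, hφ⟩ := hQ _ himg (hHfg.map' _)
    exact ⟨φ.comp ((QuotientGroup.mk' N).subgroupMap H),
      hφ.comp (MonoidHom.subgroupMap_surjective _ _)⟩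
end

section
/- If a countable group Γ contains a subgroup isomorphic to the free group on two generators, then Γ is not amenable: there is no left-invariant mean on Γ, i.e., no ℝ-linear functional m on the space of bounded functions Γ → ℝ such that m(f) ≥ 0 whenever f ≥ 0 pointwise, m(1) = 1, and m(x ↦ f(g⁻¹x)) = m(f) for all g ∈ Γ and all bounded f. (Stated in the paper: groups containing the free group on two generators are not amenable.) -/
open FreeGroup in
/-- Head o the reduced word of `w` versus that of `(of i)⁻¹ * w`. -/
lemma FreeGroupAux.head_key (i : Fin 2) (w : FreeGroup (Fin 2)) :
    w.toWord.head? = some (i, true) ∨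
      ((FreeGroup.of i)⁻¹ * w).toWord.head? = some (i, false) := by
  have hinv : (FreeGroup.of i)⁻¹ = FreeGroup.mk [(i, false)] := by
    rw [FreeGroup.of, FreeGroup.inv_mk]; rfl
  have hmul : ((FreeGroup.of i)⁻¹ * w).toWord = reduce ((i, false) :: w.toWord) := by
    conv_lhs => rw [hinv, ← FreeGroup.mk_toWord (x := w), FreeGroup.mul_mk]
    rw [FreeGroup.toWord_mk]; rfl
  have hred : reduce w.toWord = w.toWord := FreeGroup.reduce_toWord w
  rcases hL : w.toWord with _ | ⟨⟨j, s⟩, rest⟩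
  · right
    rw [hmul, hL]
    simp [FreeGroup.reduce_singleton]
  · by_cases h : j = i ∧ s = true
    · left; simp [h.1, h.2]
    · right
      rw [hmul, hL]
      rw [hL] at hred
      rw [FreeGroup.reduce.cons, hred]
      have : ¬ ((i, false).1 = (j, s).1 ∧ (i, false).2 = !(j, s).2) := by
        rintro ⟨h1, h2⟩
        exact h ⟨h1.symm, by simpa using h2.symm⟩
      simp only [this, if_false]
      rfl

/-- The indicator of reduced words whose head is `(i, s)`, as a bounded function. -/
def FreeGroupAux.ind (i : Fin 2) (s : Bool) : BoundedFun (FreeGroup (Fin 2)) :=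
  ⟨fun w => if w.toWord.head? = some (i, s) then 1 else 0,
    ⟨1, fun w => by dsimp only; split <;> norm_num⟩⟩

/-- The free group on two generators admits no invariant mean. -/
lemma FreeGroupAux.no_mean (m : BoundedFun (FreeGroup (Fin 2)) →ₗ[ℝ] ℝ) :
    ¬ IsInvariantMean (FreeGroup (Fin 2)) m := by
  rintro ⟨hpos, hone, hinv⟩
  let G := FreeGroup (Fin 2)
  have mono : ∀ f g : BoundedFun G, (∀ x, (f : G → ℝ) x ≤ (g : G → ℝ) x) → m f ≤ m g := by
    intro f g h
    have h0 : (0 : ℝ) ≤ m (g - f) := by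
      refine hpos _ fun x => ?_
      have : ((g - f : BoundedFun G) : G → ℝ) x = (g : G → ℝ) x - (f : G → ℝ) x := rfl
      rw [this]; linarith [h x]
    rw [map_sub] at h0; linarith
  set oneF : BoundedFun G := ⟨fun _ => (1 : ℝ), ⟨1, fun x => by norm_num⟩⟩ with honeF
  have h1 : m oneF = 1 := hone
  -- each indicator has nonnegative mean
  have hnn : ∀ i s, 0 ≤ m (ind i s) := by
    intro i s
    refine hpos _ fun x => ?_
    show (0:ℝ) ≤ if x.toWord.head? = some (i, s) then 1 else 0
    split <;> norm_num
  -- step 1 : 1 ≤ m (ind i true) + m (ind i false)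
  have step1 : ∀ i : Fin 2, 1 ≤ m (ind i true) + m (ind i false) := by
    intro i
    set tf : BoundedFun G := ⟨fun x => (ind i false : G → ℝ) ((FreeGroup.of i)⁻¹ * x), by
      obtain ⟨C, hC⟩ := (ind i false).2
      exact ⟨C, fun x => hC _⟩⟩ with htf
    have htfval : m tf = m (ind i false) := hinv (FreeGroup.of i) (ind i false)
    have hle : m oneF ≤ m (ind i true + tf) := by
      refine mono _ _ fun x => ?_
      show (1:ℝ) ≤ (ind i true : G → ℝ) x + (tf : G → ℝ) x
      show (1:ℝ) ≤ (if x.toWord.head? = some (i, true) then (1:ℝ) else 0)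
        + (if ((FreeGroup.of i)⁻¹ * x).toWord.head? = some (i, false) then (1:ℝ) else 0)
      rcases head_key i x with h | h
      · rw [h, if_pos rfl]; split <;> norm_num
      · rw [h, if_pos rfl]; split <;> norm_num
    rw [h1, map_add, htfval] at hle
    exact hle
  -- step 2 : the four indicators sum to at most 1
  have step2 : m (ind 0 true) + m (ind 0 false) + m (ind 1 true) + m (ind 1 false) ≤ 1 := by
    have hle : m (ind 0 true + ind 0 false + ind 1 true + ind 1 false) ≤ m oneF := by
      refine mono _ _ fun x => ?_
      show ((if x.toWord.head? = some (0, true) then (1:ℝ) else 0)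
          + (if x.toWord.head? = some (0, false) then (1:ℝ) else 0)
          + (if x.toWord.head? = some (1, true) then (1:ℝ) else 0)
          + (if x.toWord.head? = some (1, false) then (1:ℝ) else 0)) ≤ 1
      rcases h : x.toWord.head? with _ | ⟨i, s⟩
      · simp
      · fin_cases i <;> cases s <;> simp <;> norm_num
    rw [h1] at hle
    simpa [map_add] using hle
  have := step1 0
  have := step1 1
  have := hnn 0 true
  have := hnn 0 false
  have := hnn 1 true
  have := hnn 1 false
  linarith

/-- **Groups containing a free group on two generators are not amenable.**  If a countable
group `Γ` has a subgroup isomorphic to the free group on two generators, then `Γ` admits no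
left-invariant mean. -/
theorem not_isAmenable_of_free_subgroup {Γ : Type*} [Group Γ] [Countable Γ]
    (H : Subgroup Γ) (hH : Nonempty (H ≃* FreeGroup (Fin 2))) :
    ¬ IsAmenable Γ := by
  classical
  rintro ⟨m, hpos, hone, hinv⟩
  obtain ⟨e⟩ := hH
  set G := FreeGroup (Fin 2) with hG
  let φ : G →* Γ := H.subtype.comp e.symm.toMonoidHom
  have hφ : Function.Injective φ := H.subtype_injective.comp e.symm.injective
  -- equivalence: same right coset of the image of φ
  let s : Setoid Γ :=
    ⟨fun x y => x * y⁻¹ ∈ φ.range,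
      ⟨fun x => by simpa using one_mem φ.range,
       fun {x y} h => by simpa using inv_mem h,
       fun {x y z} h1 h2 => by simpa [mul_assoc] using mul_mem h1 h2⟩⟩
  let r : Γ → Γ := fun x => (Quotient.mk s x).out
  have hr : ∀ x, x * (r x)⁻¹ ∈ φ.range := by
    intro x
    have : s.r (Quotient.mk s x).out x := Quotient.mk_out (s := s) x
    simpa using inv_mem this
  let κ : Γ → G := fun x => (hr x).choose
  have hκ : ∀ x, φ (κ x) = x * (r x)⁻¹ := fun x => (hr x).choose_spec
  have hκtr : ∀ (g : G) (x : Γ), κ ((φ g)⁻¹ * x) = g⁻¹ * κ x := by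
    intro g x
    have hrr : r ((φ g)⁻¹ * x) = r x := by
      have : Quotient.mk s ((φ g)⁻¹ * x) = Quotient.mk s x := by
        refine Quotient.sound ?_
        show ((φ g)⁻¹ * x) * x⁻¹ ∈ φ.range
        simpa using ⟨g⁻¹, by simp⟩
      show (Quotient.mk s ((φ g)⁻¹ * x)).out = (Quotient.mk s x).out
      rw [this]
    apply hφ
    rw [hκ, hrr, map_mul, map_inv, hκ, mul_assoc]
  -- pull back bounded functions along κ
  let pull : BoundedFun G →ₗ[ℝ] BoundedFun Γ :=
    { toFun := fun f => ⟨fun x => (f : G → ℝ) (κ x), by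
        obtain ⟨C, hC⟩ := f.2
        exact ⟨C, fun x => hC _⟩⟩
      map_add' := fun f g => rfl
      map_smul' := fun c f => rfl }
  refine FreeGroupAux.no_mean (m.comp pull) ⟨?_, ?_, ?_⟩
  · intro f hf
    exact hpos _ fun x => hf _
  · exact hone
  · intro g f
    have key : pull ⟨fun x => (f : G → ℝ) (g⁻¹ * x), by
        obtain ⟨C, hC⟩ := f.2
        exact ⟨C, fun x => hC _⟩⟩ =
      ⟨fun x => ((pull f : BoundedFun Γ) : Γ → ℝ) ((φ g)⁻¹ * x), by
        obtain ⟨C, hC⟩ := (pull f : BoundedFun Γ).2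
        exact ⟨C, fun x => hC _⟩⟩ := by
      apply Subtype.ext
      funext x
      show (f : G → ℝ) (g⁻¹ * κ x) = (f : G → ℝ) (κ ((φ g)⁻¹ * x))
      rw [hκtr]
    show m (pull _) = m (pull f)
    rw [key]
    exact hinv (φ g) (pull f)
end
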